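/- The generating function G(z, x) := E ( z^{|𝒯|} Σ_{v ∈ 𝒯} x^{d(v, o)} ), defined for |z|, |x| < 1, satisfies the closed-form identity G(z, x) = F(z) / (1 − z x Φ'(F(z))). -/

import Mathlib

open scoped ENNReal BigOperators
open Set Filter

/-- Plane (ordered rooted) trees. -/
inductive PlaneTree : Type
  | node : List PlaneTree → PlaneTree

namespace PlaneTree

/-- The list of subtrees hanging off the root. -/
def children : PlaneTree → List PlaneTree
  | .node ts => ts

/-- The subtree rooted at a given position (sequence of child indices), if it exists. -/
def subtreeAt : PlaneTree → List ℕ → Option PlaneTree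
  | t, [] => some t
  | .node ts, i :: q =>
    match ts[i]? with
    | some t' => subtreeAt t' q
    | none => none

/-- The vertex set of a tree, with vertices identified with their positions. -/
def vertexSet (t : PlaneTree) : Set (List ℕ) := {q | (subtreeAt t q).isSome}

/-- The number of vertices of a tree. -/
noncomputable def size (t : PlaneTree) : ℕ := (vertexSet t).ncard

/-- The number of children of the vertex at position `q`. -/
def childCount (t : PlaneTree) (q : List ℕ) : ℕ :=
  ((subtreeAt t q).map fun t' => t'.children.length).getD 0

end PlaneTree

namespace PlaneTree

@[simp] lemma subtreeAt_nil (t : PlaneTree) : subtreeAt t [] = some t := by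
  cases t <;> rfl

lemma subtreeAt_cons (ts : List PlaneTree) (i : ℕ) (q : List ℕ) (h : i < ts.length) :
    subtreeAt (node ts) (i :: q) = subtreeAt ts[i] q := by
  rw [subtreeAt]
  simp [List.getElem?_eq_getElem h]

lemma subtreeAt_cons_of_ge (ts : List PlaneTree) (i : ℕ) (q : List ℕ) (h : ts.length ≤ i) :
    subtreeAt (node ts) (i :: q) = none := by
  rw [subtreeAt]
  simp [List.getElem?_eq_none h]

lemma mem_vertexSet_node (ts : List PlaneTree) (q : List ℕ) :
    q ∈ vertexSet (node ts) ↔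
      q = [] ∨ ∃ i q', q = i :: q' ∧ ∃ h : i < ts.length, q' ∈ vertexSet ts[i] := by
  cases q with
  | nil => simp [vertexSet]
  | cons i q' =>
    simp only [vertexSet, Set.mem_setOf_eq]
    rcases lt_or_ge i ts.length with h | h
    · rw [subtreeAt_cons ts i q' h]
      constructor
      · intro hq; exact Or.inr ⟨i, q', rfl, h, hq⟩
      · rintro (h' | ⟨i', q'', heq, h', hq⟩)
        · exact absurd h' (by simp at h' ⊢)
        · obtain ⟨rfl, rfl⟩ : i' = i ∧ q'' = q' := by
            constructor <;> [exact (List.cons.injEq .. ▸ heq).1.symm; exact (List.cons.injEq .. ▸ heq).2.symm]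
          exact hq
    · rw [subtreeAt_cons_of_ge ts i q' h]
      simp only [Option.isSome_none, Bool.false_eq_true, false_iff]
      rintro (h' | ⟨i', q'', heq, h', hq⟩)
      · simp at h'
      · obtain ⟨rfl, rfl⟩ : i' = i ∧ q'' = q' := by
          constructor <;> [exact (List.cons.injEq .. ▸ heq).1.symm; exact (List.cons.injEq .. ▸ heq).2.symm]
        omega

lemma vertexSet_node (ts : List PlaneTree) :
    vertexSet (node ts) =
      insert [] (⋃ i : Fin ts.length, (List.cons i.1) '' vertexSet (ts.get i)) := by
  ext q
  rw [mem_vertexSet_node]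
  simp only [Set.mem_insert_iff, Set.mem_iUnion, Set.mem_image]
  constructor
  · rintro (rfl | ⟨i, q', rfl, h, hq⟩)
    · exact Or.inl rfl
    · exact Or.inr ⟨⟨i, h⟩, q', hq, rfl⟩
  · rintro (rfl | ⟨i, q', hq, rfl⟩)
    · exact Or.inl rfl
    · exact Or.inr ⟨i.1, q', rfl, i.2, hq⟩

lemma vertexSet_finite : ∀ t : PlaneTree, (vertexSet t).Finite
  | node ts => by
    rw [vertexSet_node]
    refine Set.Finite.insert _ (Set.finite_iUnion fun i => ?_)
    exact Set.Finite.image _ (vertexSet_finite (ts.get i))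
  termination_by t => sizeOf t
  decreasing_by
    have := List.sizeOf_lt_of_mem (List.get_mem ts i)
    simp only [node.sizeOf_spec, Fin.eta] at this ⊢; omega

lemma nil_mem_vertexSet (t : PlaneTree) : [] ∈ vertexSet t := by
  simp [vertexSet]

/-- The vertex set as a Finset. -/
noncomputable def VF (t : PlaneTree) : Finset (List ℕ) := (vertexSet_finite t).toFinset

@[simp] lemma mem_VF {t : PlaneTree} {q : List ℕ} : q ∈ VF t ↔ q ∈ vertexSet t :=
  (vertexSet_finite t).mem_toFinset

lemma coe_VF (t : PlaneTree) : (VF t : Set (List ℕ)) = vertexSet t :=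
  (vertexSet_finite t).coe_toFinset

lemma VF_node (ts : List PlaneTree) :
    VF (node ts) =
      insert [] (Finset.univ.biUnion fun i : Fin ts.length =>
        (VF (ts.get i)).image (List.cons i.1)) := by
  ext q
  simp only [mem_VF, vertexSet_node, Set.mem_insert_iff, Set.mem_iUnion, Set.mem_image,
    Finset.mem_insert, Finset.mem_biUnion, Finset.mem_univ, Finset.mem_image, true_and]

lemma nil_not_mem_biUnion (ts : List PlaneTree) :
    [] ∉ Finset.univ.biUnion fun i : Fin ts.length =>
        (VF (ts.get i)).image (List.cons i.1) := by
  simp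

lemma biUnion_pairwise_disjoint (ts : List PlaneTree) :
    ∀ i ∈ (Finset.univ : Finset (Fin ts.length)), ∀ j ∈ Finset.univ, i ≠ j →
      Disjoint ((VF (ts.get i)).image (List.cons i.1))
        ((VF (ts.get j)).image (List.cons j.1)) := by
  intro i _ j _ hij
  simp only [Finset.disjoint_left, Finset.mem_image]
  rintro q ⟨a, _, rfl⟩ ⟨b, _, hb⟩
  exact hij (Fin.ext (by injection hb.symm))

lemma prod_VF_node {M : Type*} [CommMonoid M] (ts : List PlaneTree) (f : List ℕ → M) :
    ∏ v ∈ VF (node ts), f v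
      = f [] * ∏ i : Fin ts.length, ∏ q ∈ VF (ts.get i), f (i.1 :: q) := by
  rw [VF_node, Finset.prod_insert (nil_not_mem_biUnion ts),
    Finset.prod_biUnion (biUnion_pairwise_disjoint ts)]
  congr 1
  refine Finset.prod_congr rfl fun i _ => ?_
  rw [Finset.prod_image]
  intro a _ b _ hab
  injection hab

lemma sum_VF_node {M : Type*} [AddCommMonoid M] (ts : List PlaneTree) (f : List ℕ → M) :
    ∑ v ∈ VF (node ts), f v
      = f [] + ∑ i : Fin ts.length, ∑ q ∈ VF (ts.get i), f (i.1 :: q) := by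
  rw [VF_node, Finset.sum_insert (nil_not_mem_biUnion ts),
    Finset.sum_biUnion (biUnion_pairwise_disjoint ts)]
  congr 1
  refine Finset.sum_congr rfl fun i _ => ?_
  rw [Finset.sum_image]
  intro a _ b _ hab
  injection hab

lemma size_eq_card (t : PlaneTree) : size t = (VF t).card := by
  rw [size, ← coe_VF, Set.ncard_coe_finset]

lemma size_node (ts : List PlaneTree) :
    size (node ts) = 1 + ∑ i : Fin ts.length, size (ts.get i) := by
  have : ∀ u : PlaneTree, size u = ∑ v ∈ VF u, 1 := by
    intro u; rw [size_eq_card, Finset.card_eq_sum_ones]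
  rw [this, sum_VF_node]
  simp only [← this]

@[simp] lemma childCount_nil (t : PlaneTree) : childCount t [] = t.children.length := by
  simp [childCount]

lemma childCount_node_cons (ts : List PlaneTree) (i : Fin ts.length) (q : List ℕ) :
    childCount (node ts) (i.1 :: q) = childCount (ts.get i) q := by
  rw [childCount, childCount, subtreeAt_cons ts i.1 q i.2]
  rfl

lemma one_le_size (t : PlaneTree) : 1 ≤ size t := by
  rw [size_eq_card]
  exact Finset.card_pos.mpr ⟨[], mem_VF.mpr (nil_mem_vertexSet t)⟩

end PlaneTree


/-- Longest common prefix of two positions; this is the position of the last common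
ancestor of the two vertices. -/
def lca : List ℕ → List ℕ → List ℕ
  | a :: as, b :: bs => if a = b then a :: lca as bs else []
  | _, _ => []

/-- The distance from `v` up to the last common ancestor of `v` and `w`. -/
def dUp (v w : List ℕ) : ℕ := v.length - (lca v w).length

/-- The graph distance between the vertices at positions `v` and `w`. -/
def treeDist (v w : List ℕ) : ℕ := dUp v w + dUp w v

/-- The Galton–Watson probability of a given finite tree: the product, over all vertices,
of the probability that the offspring distribution takes the value given by the number of
children of the vertex. -/
noncomputable def gwProb (p : ℕ → ℝ≥0∞) (t : PlaneTree) : ℝ≥0∞ :=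
  ∏ᶠ v ∈ PlaneTree.vertexSet t, p (PlaneTree.childCount t v)

/-- `P(|𝒯| = n)` for the Galton–Watson tree `𝒯`. -/
noncomputable def probSize (p : ℕ → ℝ≥0∞) (n : ℕ) : ℝ≥0∞ :=
  ∑' t : PlaneTree, if PlaneTree.size t = n then gwProb p t else 0

/-- `E f(T_n)` where `T_n` is the Galton–Watson tree conditioned to have `n` vertices. -/
noncomputable def condExp (p : ℕ → ℝ≥0∞) (n : ℕ) (f : PlaneTree → ℝ≥0∞) : ℝ≥0∞ :=
  (∑' t : PlaneTree, if PlaneTree.size t = n then gwProb p t * f t else 0) / probSize p n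

/-- The variance of the offspring distribution `p` (which has mean `1`). -/
noncomputable def xiVar (p : ℕ → ℝ≥0∞) : ℝ≥0∞ :=
  ∑' k : ℕ, p k * ENNReal.ofReal (((k : ℝ) - 1) ^ 2)

/-- `P_k(t)`: the number of unordered pairs of vertices of `t` at graph distance `k`. -/
noncomputable def pairCount (t : PlaneTree) (k : ℕ) : ℕ :=
  {s : Set (List ℕ) | ∃ v w, v ∈ PlaneTree.vertexSet t ∧ w ∈ PlaneTree.vertexSet t ∧
    s = {v, w} ∧ treeDist v w = k}.ncard

/-- `F(z) = E z^{|𝒯|}`, the probability generating function of the total progeny. -/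
noncomputable def Fgen (p : ℕ → ℝ≥0∞) (z : ℂ) : ℂ :=
  ∑' t : PlaneTree, ((gwProb p t).toReal : ℂ) * z ^ PlaneTree.size t

/-- `Φ'(w)`, the derivative of the probability generating function `Φ(w) = E w^ξ` of the
offspring distribution. -/
noncomputable def PhiDeriv (p : ℕ → ℝ≥0∞) (w : ℂ) : ℂ :=
  ∑' k : ℕ, (k : ℂ) * ((p k).toReal : ℂ) * w ^ (k - 1)

/-- `G(z, x) = E (z^{|𝒯|} ∑_{v ∈ 𝒯} x^{d(v, o)})`, where `o` is the root. -/
noncomputable def Ggen (p : ℕ → ℝ≥0∞) (z x : ℂ) : ℂ :=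
  ∑' t : PlaneTree, ((gwProb p t).toReal : ℂ) * z ^ PlaneTree.size t *
    ∑ᶠ v ∈ PlaneTree.vertexSet t, x ^ v.length

-- auxiliary development
open PlaneTree

/-- The weight `∑_{v ∈ t} x^{|v|}`. -/
noncomputable def Wgt (x : ℂ) (t : PlaneTree) : ℂ := ∑ᶠ v ∈ vertexSet t, x ^ v.length

lemma gwProb_eq_prod (p : ℕ → ℝ≥0∞) (t : PlaneTree) :
    gwProb p t = ∏ v ∈ VF t, p (childCount t v) := by
  rw [gwProb, ← coe_VF, finprod_mem_coe_finset]

lemma Wgt_eq_sum (x : ℂ) (t : PlaneTree) :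
    Wgt x t = ∑ v ∈ VF t, x ^ v.length := by
  rw [Wgt, ← coe_VF, finsum_mem_coe_finset]

lemma gwProb_node (p : ℕ → ℝ≥0∞) (ts : List PlaneTree) :
    gwProb p (node ts) = p ts.length * ∏ i : Fin ts.length, gwProb p (ts.get i) := by
  rw [gwProb_eq_prod, prod_VF_node]
  have h0 : p (childCount (node ts) []) = p ts.length := by rw [childCount_nil]; rfl
  rw [h0]
  congr 1
  refine Finset.prod_congr rfl fun i _ => ?_
  rw [gwProb_eq_prod]
  refine Finset.prod_congr rfl fun q _ => ?_
  rw [childCount_node_cons]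

lemma Wgt_node (x : ℂ) (ts : List PlaneTree) :
    Wgt x (node ts) = 1 + x * ∑ i : Fin ts.length, Wgt x (ts.get i) := by
  rw [Wgt_eq_sum, sum_VF_node]
  have h0 : (x : ℂ) ^ (List.length ([] : List ℕ)) = 1 := by simp
  rw [h0]
  congr 1
  rw [Finset.mul_sum]
  refine Finset.sum_congr rfl fun i _ => ?_
  rw [Wgt_eq_sum, Finset.mul_sum]
  refine Finset.sum_congr rfl fun q _ => ?_
  show x ^ (i.1 :: q).length = x * x ^ q.length
  simp [pow_succ, mul_comm]

lemma norm_Wgt_le (x : ℂ) (hx : ‖x‖ ≤ 1) (t : PlaneTree) :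
    ‖Wgt x t‖ ≤ (size t : ℝ) := by
  rw [Wgt_eq_sum, size_eq_card]
  calc ‖∑ v ∈ VF t, x ^ v.length‖ ≤ ∑ v ∈ VF t, ‖x ^ v.length‖ := norm_sum_le _ _
    _ ≤ ∑ _v ∈ VF t, 1 := by
        refine Finset.sum_le_sum fun v _ => ?_
        rw [norm_pow]
        exact pow_le_one₀ (norm_nonneg x) hx
    _ = (VF t).card := by simp

lemma gwProb_le_one (p : ℕ → ℝ≥0∞) (hp1 : ∀ k, p k ≤ 1) (t : PlaneTree) :
    gwProb p t ≤ 1 := by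
  rw [gwProb_eq_prod]
  exact Finset.prod_le_one' fun v _ => hp1 _

lemma p_le_one (p : ℕ → ℝ≥0∞) (hp : ∑' k : ℕ, p k = 1) (k : ℕ) : p k ≤ 1 :=
  hp ▸ ENNReal.le_tsum k

lemma gwProb_ne_top (p : ℕ → ℝ≥0∞) (hp : ∑' k : ℕ, p k = 1) (t : PlaneTree) :
    gwProb p t ≠ ⊤ :=
  fun h => by simpa [h] using gwProb_le_one p (p_le_one p hp) t

lemma list_prod_map_get {M : Type*} [CommMonoid M] (ts : List PlaneTree) (h : PlaneTree → M) :
    (ts.map h).prod = ∏ i : Fin ts.length, h (ts.get i) := by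
  conv_lhs => rw [← List.ofFn_get ts]
  rw [List.map_ofFn, List.prod_ofFn]
  rfl

lemma list_sum_map_get {M : Type*} [AddCommMonoid M] (ts : List PlaneTree) (h : PlaneTree → M) :
    (ts.map h).sum = ∑ i : Fin ts.length, h (ts.get i) := by
  conv_lhs => rw [← List.ofFn_get ts]
  rw [List.map_ofFn, List.sum_ofFn]
  rfl

lemma gwProb_node' (p : ℕ → ℝ≥0∞) (ts : List PlaneTree) :
    gwProb p (node ts) = p ts.length * (ts.map (gwProb p)).prod := by
  rw [gwProb_node, list_prod_map_get]

lemma Wgt_node' (x : ℂ) (ts : List PlaneTree) :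
    Wgt x (node ts) = 1 + x * (ts.map (Wgt x)).sum := by
  rw [Wgt_node, list_sum_map_get]

lemma size_node' (ts : List PlaneTree) :
    size (node ts) = 1 + (ts.map size).sum := by
  rw [size_node, list_sum_map_get]

lemma gwProb_node_ofFn (p : ℕ → ℝ≥0∞) {k : ℕ} (v : Fin k → PlaneTree) :
    gwProb p (node (List.ofFn v)) = p k * ∏ i : Fin k, gwProb p (v i) := by
  rw [gwProb_node', List.length_ofFn, List.map_ofFn, List.prod_ofFn]
  rfl

lemma Wgt_node_ofFn (x : ℂ) {k : ℕ} (v : Fin k → PlaneTree) :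
    Wgt x (node (List.ofFn v)) = 1 + x * ∑ i : Fin k, Wgt x (v i) := by
  rw [Wgt_node', List.map_ofFn, List.sum_ofFn]
  rfl

lemma size_node_ofFn {k : ℕ} (v : Fin k → PlaneTree) :
    size (node (List.ofFn v)) = 1 + ∑ i : Fin k, size (v i) := by
  rw [size_node', List.map_ofFn, List.sum_ofFn]
  rfl

-- chunk 4: total mass ≤ 1

def nodeEquiv : List PlaneTree ≃ PlaneTree where
  toFun := node
  invFun := children
  left_inv ts := rfl
  right_inv t := by cases t; rfl

/-- Height of a plane tree. -/
def PlaneTree.ht : PlaneTree → ℕ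
  | node ts => (ts.attach.map fun x => PlaneTree.ht x.1).foldr max 0 + 1
  termination_by t => sizeOf t
  decreasing_by
    have := List.sizeOf_lt_of_mem x.2
    simp only [PlaneTree.node.sizeOf_spec]; omega

lemma foldr_max_le_iff (l : List ℕ) (n : ℕ) : l.foldr max 0 ≤ n ↔ ∀ a ∈ l, a ≤ n := by
  induction l with
  | nil => simp
  | cons a l ih => simp [Nat.max_le, ih]

lemma ht_node_le_iff (ts : List PlaneTree) (n : ℕ) :
    PlaneTree.ht (node ts) ≤ n + 1 ↔ ∀ t ∈ ts, PlaneTree.ht t ≤ n := by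
  rw [PlaneTree.ht]
  simp only [Nat.add_le_add_iff_right, foldr_max_le_iff, List.mem_map]
  constructor
  · rintro h t ht
    exact h _ ⟨⟨t, ht⟩, List.mem_attach _ _, rfl⟩
  · rintro h a ⟨⟨t, ht⟩, -, rfl⟩
    exact h t ht

lemma one_le_ht (t : PlaneTree) : 1 ≤ PlaneTree.ht t := by
  cases t with
  | node ts => rw [PlaneTree.ht]; omega

/-- tsum of a product over a pi type, in `ℝ≥0∞`. -/
lemma ennreal_tsum_pi_prod {α : Type*} :
    ∀ (n : ℕ) (f : Fin n → α → ℝ≥0∞),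
      ∑' g : Fin n → α, ∏ i, f i (g i) = ∏ i, ∑' a, f i a := by
  intro n
  induction n with
  | zero =>
    intro f
    have h1 : ∀ g : Fin 0 → α, ∏ i, f i (g i) = 1 := fun g => by simp
    rw [tsum_congr h1]
    haveI : Unique (Fin 0 → α) := Pi.uniqueOfIsEmpty _
    rw [tsum_eq_single default fun g hg => absurd (Subsingleton.elim g default) hg]
    simp
  | succ n ih =>
    intro f
    rw [← Equiv.tsum_eq (Fin.consEquiv fun _ => α)]
    have : ∀ (q : α × (Fin n → α)),
        (∏ i, f i ((Fin.consEquiv fun _ => α) q i)) =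
          f 0 q.1 * ∏ i : Fin n, f i.succ (q.2 i) := by
      rintro ⟨a, g⟩
      rw [Fin.prod_univ_succ]
      simp [Fin.consEquiv]
    rw [tsum_congr this, ENNReal.tsum_prod (f := fun (a : α) (g : Fin n → α) => f 0 a * ∏ i : Fin n, f i.succ (g i))]
    simp only [ENNReal.tsum_mul_right, ENNReal.tsum_mul_left]
    rw [ih (fun i a => f i.succ a), Fin.prod_univ_succ]

/-- Total `gwProb` mass of trees of height at most `n`. -/
noncomputable def totHt (p : ℕ → ℝ≥0∞) (n : ℕ) : ℝ≥0∞ :=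
  ∑' t : PlaneTree, if PlaneTree.ht t ≤ n then gwProb p t else 0

lemma totHt_zero (p : ℕ → ℝ≥0∞) : totHt p 0 = 0 := by
  rw [totHt]
  convert tsum_zero with t
  have := one_le_ht t
  simp; omega

lemma ite_all_prod {n : ℕ} (c : Fin n → Prop) [DecidablePred c] (b : ℝ≥0∞) (a : Fin n → ℝ≥0∞) :
    (if ∀ i, c i then b * ∏ i, a i else 0) = b * ∏ i, if c i then a i else 0 := by
  by_cases h : ∀ i, c i
  · simp only [if_pos h]
    congr 1
    exact Finset.prod_congr rfl fun i _ => (if_pos (h i)).symm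
  · rw [if_neg h, eq_comm]
    push_neg at h
    obtain ⟨i, hi⟩ := h
    have h0 : (if c i then a i else (0 : ℝ≥0∞)) = 0 := if_neg hi
    rw [Finset.prod_eq_zero (Finset.mem_univ i) h0, mul_zero]

lemma totHt_succ (p : ℕ → ℝ≥0∞) (n : ℕ) :
    totHt p (n + 1) = ∑' k : ℕ, p k * (totHt p n) ^ k := by
  rw [totHt, ← Equiv.tsum_eq nodeEquiv, ← Equiv.tsum_eq List.equivSigmaTuple.symm,
    ENNReal.tsum_sigma']
  refine tsum_congr fun k => ?_
  have step : ∀ v : Fin k → PlaneTree,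
      (if PlaneTree.ht (nodeEquiv (List.equivSigmaTuple.symm ⟨k, v⟩)) ≤ n + 1 then
        gwProb p (nodeEquiv (List.equivSigmaTuple.symm ⟨k, v⟩)) else 0)
        = p k * ∏ i : Fin k, (if PlaneTree.ht (v i) ≤ n then gwProb p (v i) else 0) := by
    intro v
    have hofn : (List.equivSigmaTuple.symm ⟨k, v⟩ : List PlaneTree) = List.ofFn v := rfl
    rw [hofn]
    show (if PlaneTree.ht (node (List.ofFn v)) ≤ n + 1 then gwProb p (node (List.ofFn v)) else 0) = _
    have hcond : PlaneTree.ht (node (List.ofFn v)) ≤ n + 1 ↔ ∀ i, PlaneTree.ht (v i) ≤ n := by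
      rw [ht_node_le_iff]
      constructor
      · intro h i; exact h _ ((List.mem_ofFn ..).mpr ⟨i, rfl⟩)
      · rintro h t htm
        obtain ⟨i, rfl⟩ := (List.mem_ofFn ..).mp htm
        exact h i
    rw [if_congr hcond rfl rfl, gwProb_node_ofFn, ite_all_prod]
  rw [tsum_congr step, ENNReal.tsum_mul_left,
    ennreal_tsum_pi_prod k (fun _ t => if PlaneTree.ht t ≤ n then gwProb p t else 0)]
  show p k * ∏ _i : Fin k, totHt p n = p k * totHt p n ^ k
  rw [Finset.prod_const]
  simp

lemma totHt_le_one (p : ℕ → ℝ≥0∞) (hp : ∑' k : ℕ, p k = 1) (n : ℕ) : totHt p n ≤ 1 := by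
  induction n with
  | zero => simp [totHt_zero]
  | succ n ih =>
    rw [totHt_succ]
    calc ∑' k : ℕ, p k * (totHt p n) ^ k ≤ ∑' k : ℕ, p k * 1 := by
          refine ENNReal.tsum_le_tsum fun k => ?_
          exact mul_le_mul_right (pow_le_one' ih k) _
      _ = 1 := by simpa using hp

lemma tsum_gwProb_le_one (p : ℕ → ℝ≥0∞) (hp : ∑' k : ℕ, p k = 1) :
    ∑' t : PlaneTree, gwProb p t ≤ 1 := by
  rw [ENNReal.tsum_eq_iSup_sum]
  refine iSup_le fun s => ?_
  set N := s.sup PlaneTree.ht with hN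
  calc ∑ t ∈ s, gwProb p t = ∑ t ∈ s, if PlaneTree.ht t ≤ N then gwProb p t else 0 := by
        refine Finset.sum_congr rfl fun t ht => ?_
        rw [if_pos (Finset.le_sup ht)]
    _ ≤ totHt p N := Summable.sum_le_tsum s (fun t _ => zero_le) ENNReal.summable
    _ ≤ 1 := totHt_le_one p hp N

-- chunk 5: summability estimates

lemma nat_mul_pow_le {r : ℝ} (h0 : 0 ≤ r) (h1 : r < 1) (n : ℕ) :
    (n : ℝ) * r ^ n ≤ (1 - r)⁻¹ := by
  calc (n : ℝ) * r ^ n = ∑ _k ∈ Finset.range n, r ^ n := by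
        rw [Finset.sum_const, Finset.card_range, nsmul_eq_mul]
    _ ≤ ∑ k ∈ Finset.range n, r ^ k := by
        refine Finset.sum_le_sum fun k hk => ?_
        exact pow_le_pow_of_le_one h0 h1.le (Finset.mem_range.mp hk).le
    _ ≤ ∑' k : ℕ, r ^ k := by
        refine Summable.sum_le_tsum _ (fun k _ => pow_nonneg h0 k) ?_
        exact summable_geometric_of_lt_one h0 h1
    _ = (1 - r)⁻¹ := tsum_geometric_of_lt_one h0 h1

lemma tsum_rho_ne_top (p : ℕ → ℝ≥0∞) (hp : ∑' k : ℕ, p k = 1)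
    {r : ℝ} (h0 : 0 ≤ r) (h1 : r < 1) :
    ∑' t : PlaneTree, gwProb p t * ENNReal.ofReal ((PlaneTree.size t : ℝ) * r ^ PlaneTree.size t)
      ≠ ⊤ := by
  have hb : ∀ t : PlaneTree,
      gwProb p t * ENNReal.ofReal ((PlaneTree.size t : ℝ) * r ^ PlaneTree.size t)
        ≤ gwProb p t * ENNReal.ofReal (1 - r)⁻¹ := fun t =>
    mul_le_mul_right (ENNReal.ofReal_le_ofReal (nat_mul_pow_le h0 h1 _)) _
  have : ∑' t : PlaneTree,
      gwProb p t * ENNReal.ofReal ((PlaneTree.size t : ℝ) * r ^ PlaneTree.size t)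
      ≤ ENNReal.ofReal (1 - r)⁻¹ := by
    calc _ ≤ ∑' t : PlaneTree, gwProb p t * ENNReal.ofReal (1 - r)⁻¹ :=
          ENNReal.tsum_le_tsum hb
      _ = (∑' t : PlaneTree, gwProb p t) * ENNReal.ofReal (1 - r)⁻¹ :=
          ENNReal.tsum_mul_right
      _ ≤ 1 * ENNReal.ofReal (1 - r)⁻¹ :=
          mul_le_mul_left (tsum_gwProb_le_one p hp) _
      _ = ENNReal.ofReal (1 - r)⁻¹ := one_mul _
  exact fun h => absurd (h ▸ this) (by simp)

lemma summable_rho (p : ℕ → ℝ≥0∞) (hp : ∑' k : ℕ, p k = 1)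
    {r : ℝ} (h0 : 0 ≤ r) (h1 : r < 1) :
    Summable fun t : PlaneTree =>
      (gwProb p t).toReal * ((PlaneTree.size t : ℝ) * r ^ PlaneTree.size t) := by
  have := ENNReal.summable_toReal (tsum_rho_ne_top p hp h0 h1)
  refine this.congr fun t => ?_
  rw [ENNReal.toReal_mul, ENNReal.toReal_ofReal]
  positivity

lemma tsum_gwProb_toReal_le_one (p : ℕ → ℝ≥0∞) (hp : ∑' k : ℕ, p k = 1) :
    ∑' t : PlaneTree, (gwProb p t).toReal ≤ 1 := by
  have hne : ∑' t : PlaneTree, gwProb p t ≠ ⊤ :=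
    fun h => absurd (h ▸ tsum_gwProb_le_one p hp) (by simp)
  rw [← ENNReal.tsum_toReal_eq fun t => gwProb_ne_top p hp t]
  have := ENNReal.toReal_mono (by simp) (tsum_gwProb_le_one p hp)
  simpa using this

lemma summable_gwProb_toReal (p : ℕ → ℝ≥0∞) (hp : ∑' k : ℕ, p k = 1) :
    Summable fun t : PlaneTree => (gwProb p t).toReal :=
  ENNReal.summable_toReal
    (fun h => absurd (h ▸ tsum_gwProb_le_one p hp) (by simp))

-- chunk 6: complex pi-product Fubini

lemma pi_prod_complex {α : Type*} :
    ∀ (n : ℕ) (f : Fin n → α → ℂ), (∀ i, Summable fun a => ‖f i a‖) →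
      (Summable fun g : Fin n → α => ‖∏ i, f i (g i)‖) ∧
        ∑' g : Fin n → α, ∏ i, f i (g i) = ∏ i, ∑' a, f i a := by
  intro n
  induction n with
  | zero =>
    intro f _
    haveI : Unique (Fin 0 → α) := Pi.uniqueOfIsEmpty _
    constructor
    · exact Summable.of_finite
    · rw [tsum_eq_single default fun g hg => absurd (Subsingleton.elim g default) hg]
      simp
  | succ n ih =>
    intro f hf
    obtain ⟨ihs, ihe⟩ := ih (fun i a => f i.succ a) (fun i => hf i.succ)
    have key : ∀ (q : α × (Fin n → α)),
        (∏ i, f i ((Fin.consEquiv fun _ => α) q i)) =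
          f 0 q.1 * ∏ i : Fin n, f i.succ (q.2 i) := by
      rintro ⟨a, g⟩
      rw [Fin.prod_univ_succ]
      simp [Fin.consEquiv]
    have hmul : Summable fun q : α × (Fin n → α) =>
        ‖f 0 q.1 * ∏ i : Fin n, f i.succ (q.2 i)‖ :=
      Summable.mul_norm (f := fun a => f 0 a)
        (g := fun g : Fin n → α => ∏ i : Fin n, f i.succ (g i)) (hf 0) ihs
    constructor
    · rw [← (Fin.consEquiv fun _ => α).summable_iff]
      refine hmul.congr fun q => ?_
      simp only [Function.comp_apply]
      rw [key q]
    · rw [← Equiv.tsum_eq (Fin.consEquiv fun _ => α), tsum_congr key,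
        ← tsum_mul_tsum_of_summable_norm (hf 0) ihs, ihe, Fin.prod_univ_succ]

lemma prod_ite_index {n : ℕ} (i₀ : Fin n) (A B : ℂ) :
    (∏ j : Fin n, if j = i₀ then A else B) = A * B ^ (n - 1) := by
  rw [← Finset.mul_prod_erase _ _ (Finset.mem_univ i₀), if_pos rfl]
  congr 1
  rw [Finset.prod_congr rfl (fun j hj => if_neg (Finset.ne_of_mem_erase hj)),
    Finset.prod_const, Finset.card_erase_of_mem (Finset.mem_univ i₀), Finset.card_univ,
    Fintype.card_fin]

-- chunk 7: complex side basics

/-- The summand of `Fgen`. -/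
noncomputable def phiF (p : ℕ → ℝ≥0∞) (z : ℂ) (t : PlaneTree) : ℂ :=
  ((gwProb p t).toReal : ℂ) * z ^ PlaneTree.size t

lemma Fgen_eq_tsum_phiF (p : ℕ → ℝ≥0∞) (z : ℂ) : Fgen p z = ∑' t : PlaneTree, phiF p z t := rfl

lemma Ggen_eq_tsum (p : ℕ → ℝ≥0∞) (z x : ℂ) :
    Ggen p z x = ∑' t : PlaneTree, phiF p z t * Wgt x t := rfl

lemma norm_phiF (p : ℕ → ℝ≥0∞) (z : ℂ) (t : PlaneTree) :
    ‖phiF p z t‖ = (gwProb p t).toReal * ‖z‖ ^ PlaneTree.size t := by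
  rw [phiF, norm_mul, norm_pow, Complex.norm_real, Real.norm_eq_abs,
    abs_of_nonneg ENNReal.toReal_nonneg]

lemma summable_norm_phiF (p : ℕ → ℝ≥0∞) (hp : ∑' k : ℕ, p k = 1) {z : ℂ} (hz : ‖z‖ < 1) :
    Summable fun t : PlaneTree => ‖phiF p z t‖ := by
  refine Summable.of_nonneg_of_le (fun t => norm_nonneg _) (fun t => ?_)
    (summable_rho p hp (norm_nonneg z) hz)
  rw [norm_phiF]
  have h1 : (1 : ℝ) ≤ (PlaneTree.size t : ℝ) := by exact_mod_cast PlaneTree.one_le_size t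
  have h2 : (0:ℝ) ≤ ‖z‖ ^ PlaneTree.size t := pow_nonneg (norm_nonneg z) _
  have h3 : (0:ℝ) ≤ (gwProb p t).toReal := ENNReal.toReal_nonneg
  exact mul_le_mul_of_nonneg_left (le_mul_of_one_le_left h2 h1) h3

lemma summable_norm_psi (p : ℕ → ℝ≥0∞) (hp : ∑' k : ℕ, p k = 1) {z x : ℂ}
    (hz : ‖z‖ < 1) (hx : ‖x‖ ≤ 1) :
    Summable fun t : PlaneTree => ‖phiF p z t * Wgt x t‖ := by
  refine Summable.of_nonneg_of_le (fun t => norm_nonneg _) (fun t => ?_)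
    (summable_rho p hp (norm_nonneg z) hz)
  rw [norm_mul, norm_phiF]
  have h1 := norm_Wgt_le x hx t
  have h2 : (0:ℝ) ≤ ‖z‖ ^ PlaneTree.size t := pow_nonneg (norm_nonneg z) _
  have h3 : (0:ℝ) ≤ (gwProb p t).toReal := ENNReal.toReal_nonneg
  calc (gwProb p t).toReal * ‖z‖ ^ PlaneTree.size t * ‖Wgt x t‖
      ≤ (gwProb p t).toReal * ‖z‖ ^ PlaneTree.size t * (PlaneTree.size t : ℝ) :=
        mul_le_mul_of_nonneg_left h1 (by positivity)
    _ = (gwProb p t).toReal * ((PlaneTree.size t : ℝ) * ‖z‖ ^ PlaneTree.size t) := by ring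

lemma norm_Fgen_le_one (p : ℕ → ℝ≥0∞) (hp : ∑' k : ℕ, p k = 1) {z : ℂ} (hz : ‖z‖ < 1) :
    ‖Fgen p z‖ ≤ 1 := by
  rw [Fgen_eq_tsum_phiF]
  calc ‖∑' t : PlaneTree, phiF p z t‖ ≤ ∑' t : PlaneTree, ‖phiF p z t‖ :=
        norm_tsum_le_tsum_norm (summable_norm_phiF p hp hz)
    _ ≤ ∑' t : PlaneTree, (gwProb p t).toReal := by
        refine Summable.tsum_le_tsum (fun t => ?_) (summable_norm_phiF p hp hz)
          (summable_gwProb_toReal p hp)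
        rw [norm_phiF]
        exact mul_le_of_le_one_right ENNReal.toReal_nonneg
          (pow_le_one₀ (norm_nonneg z) hz.le)
    _ ≤ 1 := tsum_gwProb_toReal_le_one p hp

lemma summable_kp (p : ℕ → ℝ≥0∞) (hmean : ∑' k : ℕ, (k : ℝ≥0∞) * p k = 1) :
    Summable fun k : ℕ => (k : ℝ) * (p k).toReal := by
  have := ENNReal.summable_toReal (f := fun k : ℕ => (k : ℝ≥0∞) * p k)
    (by rw [hmean]; exact ENNReal.one_ne_top)
  refine this.congr fun k => ?_
  rw [ENNReal.toReal_mul]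
  norm_num

lemma tsum_kp_eq_one (p : ℕ → ℝ≥0∞) (hmean : ∑' k : ℕ, (k : ℝ≥0∞) * p k = 1) :
    ∑' k : ℕ, (k : ℝ) * (p k).toReal = 1 := by
  have hne : ∀ k : ℕ, (k : ℝ≥0∞) * p k ≠ ⊤ := fun k =>
    ENNReal.ne_top_of_tsum_ne_top (by rw [hmean]; exact ENNReal.one_ne_top) k
  have := ENNReal.tsum_toReal_eq hne
  rw [hmean] at this
  simp only [ENNReal.toReal_mul, ENNReal.toReal_natCast] at this
  rw [show ((1:ℝ≥0∞)).toReal = (1:ℝ) from rfl] at this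
  rw [← this]

lemma summable_p_toReal (p : ℕ → ℝ≥0∞) (hp : ∑' k : ℕ, p k = 1) :
    Summable fun k : ℕ => (p k).toReal :=
  ENNReal.summable_toReal (by rw [hp]; exact ENNReal.one_ne_top)

lemma summable_norm_phideriv_term (p : ℕ → ℝ≥0∞) (hmean : ∑' k : ℕ, (k : ℝ≥0∞) * p k = 1)
    {w : ℂ} (hw : ‖w‖ ≤ 1) :
    Summable fun k : ℕ => ‖(k : ℂ) * ((p k).toReal : ℂ) * w ^ (k - 1)‖ := by
  refine Summable.of_nonneg_of_le (fun k => norm_nonneg _) (fun k => ?_) (summable_kp p hmean)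
  rw [norm_mul, norm_mul, norm_pow, Complex.norm_natCast, Complex.norm_real,
    Real.norm_eq_abs, abs_of_nonneg ENNReal.toReal_nonneg]
  have h2 : ‖w‖ ^ (k - 1) ≤ 1 := pow_le_one₀ (norm_nonneg w) hw
  have h3 : (0:ℝ) ≤ (k : ℝ) * (p k).toReal := by positivity
  nlinarith

lemma norm_PhiDeriv_le_one (p : ℕ → ℝ≥0∞) (hmean : ∑' k : ℕ, (k : ℝ≥0∞) * p k = 1)
    {w : ℂ} (hw : ‖w‖ ≤ 1) : ‖PhiDeriv p w‖ ≤ 1 := by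
  rw [PhiDeriv]
  calc ‖∑' k : ℕ, (k : ℂ) * ((p k).toReal : ℂ) * w ^ (k - 1)‖
      ≤ ∑' k : ℕ, ‖(k : ℂ) * ((p k).toReal : ℂ) * w ^ (k - 1)‖ :=
        norm_tsum_le_tsum_norm (summable_norm_phideriv_term p hmean hw)
    _ ≤ ∑' k : ℕ, (k : ℝ) * (p k).toReal := by
        refine Summable.tsum_le_tsum (fun k => ?_) (summable_norm_phideriv_term p hmean hw)
          (summable_kp p hmean)
        rw [norm_mul, norm_mul, norm_pow, Complex.norm_natCast, Complex.norm_real,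
          Real.norm_eq_abs, abs_of_nonneg ENNReal.toReal_nonneg]
        have h2 : ‖w‖ ^ (k - 1) ≤ 1 := pow_le_one₀ (norm_nonneg w) hw
        have h3 : (0:ℝ) ≤ (k : ℝ) * (p k).toReal := by positivity
        nlinarith
    _ = 1 := tsum_kp_eq_one p hmean

-- chunk 8: decomposition of tree sums

/-- The equivalence between sigma-indexed tuples and plane trees. -/
def treeSigmaEquiv : ((k : ℕ) × (Fin k → PlaneTree)) ≃ PlaneTree :=
  List.equivSigmaTuple.symm.trans nodeEquiv

lemma tsum_tree_eq (u : PlaneTree → ℂ) (hu : Summable u) :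
    ∑' t : PlaneTree, u t
      = ∑' (k : ℕ) (v : Fin k → PlaneTree), u (node (List.ofFn v)) := by
  rw [← Equiv.tsum_eq treeSigmaEquiv u,
    Summable.tsum_sigma (f := fun σ : (k : ℕ) × (Fin k → PlaneTree) => u (treeSigmaEquiv σ))
      ((treeSigmaEquiv.summable_iff).mpr hu)]
  exact tsum_congr fun k => tsum_congr fun v => rfl

lemma phiF_node_ofFn (p : ℕ → ℝ≥0∞) (hp : ∑' k : ℕ, p k = 1) (z : ℂ) {k : ℕ}
    (v : Fin k → PlaneTree) :
    phiF p z (node (List.ofFn v)) = ((p k).toReal : ℂ) * z * ∏ i : Fin k, phiF p z (v i) := by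
  simp only [phiF]
  rw [gwProb_node_ofFn, size_node_ofFn,
    ENNReal.toReal_mul, ENNReal.toReal_prod]
  push_cast
  rw [pow_add, pow_one, ← Finset.prod_pow_eq_pow_sum, Finset.prod_mul_distrib]
  ring

lemma Fgen_fixed (p : ℕ → ℝ≥0∞) (hp : ∑' k : ℕ, p k = 1) {z : ℂ} (hz : ‖z‖ < 1) :
    Fgen p z = ∑' k : ℕ, ((p k).toReal : ℂ) * z * Fgen p z ^ k := by
  have hφn := summable_norm_phiF p hp hz
  have hφ : Summable (phiF p z) := summable_norm_iff.mp hφn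
  calc Fgen p z = ∑' t : PlaneTree, phiF p z t := rfl
    _ = ∑' (k : ℕ) (v : Fin k → PlaneTree), phiF p z (node (List.ofFn v)) :=
        tsum_tree_eq _ hφ
    _ = ∑' k : ℕ, ((p k).toReal : ℂ) * z * Fgen p z ^ k := by
        refine tsum_congr fun k => ?_
        rw [tsum_congr (fun v => phiF_node_ofFn p hp z v), tsum_mul_left,
          (pi_prod_complex k (fun _ => phiF p z) (fun _ => hφn)).2,
          Finset.prod_const, Finset.card_univ, Fintype.card_fin, ← Fgen_eq_tsum_phiF]

lemma prod_mul_pick {k : ℕ} (i₀ : Fin k) (a b : PlaneTree → ℂ) (v : Fin k → PlaneTree) :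
    (∏ j, a (v j)) * b (v i₀)
      = ∏ j, (if j = i₀ then a (v j) * b (v j) else a (v j)) := by
  rw [← Finset.prod_erase_mul _ _ (Finset.mem_univ i₀),
    ← Finset.prod_erase_mul _ (fun j => if j = i₀ then a (v j) * b (v j) else a (v j))
      (Finset.mem_univ i₀), if_pos rfl,
    Finset.prod_congr rfl (fun j hj => if_neg (Finset.ne_of_mem_erase hj))]
  ring

-- chunk 9: the G expansion and the main theorem

lemma tsum_pick (p : ℕ → ℝ≥0∞) (hp : ∑' k : ℕ, p k = 1) {z x : ℂ}
    (hz : ‖z‖ < 1) (hx : ‖x‖ < 1) {k : ℕ} (i₀ : Fin k) :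
    (Summable fun v : Fin k → PlaneTree =>
      ∏ j, (if j = i₀ then phiF p z (v j) * Wgt x (v j) else phiF p z (v j))) ∧
    ∑' v : Fin k → PlaneTree,
        ∏ j, (if j = i₀ then phiF p z (v j) * Wgt x (v j) else phiF p z (v j))
      = Ggen p z x * Fgen p z ^ (k - 1) := by
  have hφn := summable_norm_phiF p hp hz
  have hψn := summable_norm_psi p hp hz hx.le
  set f : Fin k → PlaneTree → ℂ :=
    fun j t => if j = i₀ then phiF p z t * Wgt x t else phiF p z t with hf
  have hfn : ∀ j, Summable fun t => ‖f j t‖ := by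
    intro j
    by_cases h : j = i₀ <;> simp only [hf, h, if_true, if_false, if_neg] <;>
      first
        | exact hψn
        | exact hφn
  obtain ⟨hs, he⟩ := pi_prod_complex k f hfn
  refine ⟨summable_norm_iff.mp hs, ?_⟩
  rw [he]
  have hfac : ∀ j : Fin k, (∑' t : PlaneTree, f j t)
      = if j = i₀ then Ggen p z x else Fgen p z := by
    intro j
    by_cases h : j = i₀ <;> simp only [hf, h, if_true, if_false, if_neg] <;> rfl
  rw [Finset.prod_congr rfl fun j _ => hfac j, prod_ite_index]

lemma Ggen_term (p : ℕ → ℝ≥0∞) (hp : ∑' k : ℕ, p k = 1) {z x : ℂ}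
    (hz : ‖z‖ < 1) (hx : ‖x‖ < 1) (k : ℕ) :
    ∑' v : Fin k → PlaneTree,
        phiF p z (node (List.ofFn v)) * Wgt x (node (List.ofFn v))
      = ((p k).toReal : ℂ) * z *
          (Fgen p z ^ k + x * k * (Ggen p z x * Fgen p z ^ (k - 1))) := by
  have hφn := summable_norm_phiF p hp hz
  set c : ℂ := ((p k).toReal : ℂ) * z with hc
  have step1 : ∀ v : Fin k → PlaneTree,
      phiF p z (node (List.ofFn v)) * Wgt x (node (List.ofFn v))
        = c * ∏ i, phiF p z (v i)
          + c * x * ∑ i₀ : Fin k, ∏ j,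
              (if j = i₀ then phiF p z (v j) * Wgt x (v j) else phiF p z (v j)) := by
    intro v
    rw [phiF_node_ofFn p hp z v, Wgt_node_ofFn]
    conv_rhs => rw [Finset.sum_congr rfl
      (fun i₀ _ => (prod_mul_pick i₀ (phiF p z) (Wgt x) v).symm)]
    rw [← Finset.mul_sum]
    ring
  have hA : Summable fun v : Fin k → PlaneTree => c * ∏ i, phiF p z (v i) :=
    (summable_norm_iff.mp (pi_prod_complex k (fun _ => phiF p z) (fun _ => hφn)).1).mul_left c
  have hB : Summable fun v : Fin k → PlaneTree =>
      c * x * ∑ i₀ : Fin k, ∏ j,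
        (if j = i₀ then phiF p z (v j) * Wgt x (v j) else phiF p z (v j)) := by
    refine Summable.mul_left _ (summable_sum fun i₀ _ => ?_)
    exact (tsum_pick p hp hz hx i₀).1
  rw [tsum_congr step1, Summable.tsum_add hA hB, tsum_mul_left, tsum_mul_left,
    (pi_prod_complex k (fun _ => phiF p z) (fun _ => hφn)).2,
    Finset.prod_const, Finset.card_univ, Fintype.card_fin, ← Fgen_eq_tsum_phiF,
    Summable.tsum_finsetSum fun i₀ _ => (tsum_pick p hp hz hx i₀).1,
    Finset.sum_congr rfl fun i₀ _ => (tsum_pick p hp hz hx i₀).2,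
    Finset.sum_const, Finset.card_univ, Fintype.card_fin, nsmul_eq_mul]
  ring

lemma Ggen_fixed (p : ℕ → ℝ≥0∞) (hp : ∑' k : ℕ, p k = 1)
    (hmean : ∑' k : ℕ, (k : ℝ≥0∞) * p k = 1) {z x : ℂ}
    (hz : ‖z‖ < 1) (hx : ‖x‖ < 1) :
    Ggen p z x = Fgen p z + z * x * PhiDeriv p (Fgen p z) * Ggen p z x := by
  have hψn := summable_norm_psi p hp hz hx.le
  have hψ : Summable fun t => phiF p z t * Wgt x t := summable_norm_iff.mp hψn
  have hF1 : ‖Fgen p z‖ ≤ 1 := norm_Fgen_le_one p hp hz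
  have hS1 : Summable fun k : ℕ => ((p k).toReal : ℂ) * z * Fgen p z ^ k := by
    refine Summable.of_norm_bounded (g := fun k => (p k).toReal) (summable_p_toReal p hp)
      fun k => ?_
    rw [norm_mul, norm_mul, norm_pow, Complex.norm_real, Real.norm_eq_abs,
      abs_of_nonneg ENNReal.toReal_nonneg]
    have h2 : ‖Fgen p z‖ ^ k ≤ 1 := pow_le_one₀ (norm_nonneg _) hF1
    show (p k).toReal * ‖z‖ * ‖Fgen p z‖ ^ k ≤ (p k).toReal
    calc (p k).toReal * ‖z‖ * ‖Fgen p z‖ ^ k ≤ (p k).toReal * 1 * 1 := by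
          gcongr <;> first | exact hz.le | exact h2 | positivity
      _ = (p k).toReal := by ring
  have hS2 : Summable fun k : ℕ =>
      ((p k).toReal : ℂ) * z * (x * k * (Ggen p z x * Fgen p z ^ (k - 1))) := by
    refine Summable.of_norm_bounded
      (g := fun k => (k : ℝ) * (p k).toReal * ‖Ggen p z x‖)
      ((summable_kp p hmean).mul_right _) fun k => ?_
    rw [norm_mul, norm_mul, norm_mul, norm_mul, norm_mul, norm_pow, Complex.norm_real,
      Real.norm_eq_abs, abs_of_nonneg ENNReal.toReal_nonneg, Complex.norm_natCast]
    have h2 : ‖Fgen p z‖ ^ (k - 1) ≤ 1 := pow_le_one₀ (norm_nonneg _) hF1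
    have h3 : (0:ℝ) ≤ (p k).toReal := ENNReal.toReal_nonneg
    have h4 : (0:ℝ) ≤ ‖Ggen p z x‖ := norm_nonneg _
    have h5 : ‖z‖ ≤ 1 := hz.le
    have h6 : ‖x‖ ≤ 1 := hx.le
    have h7 : (0:ℝ) ≤ (k:ℝ) := Nat.cast_nonneg k
    have h8 : (0:ℝ) ≤ ‖Fgen p z‖ ^ (k-1) := pow_nonneg (norm_nonneg _) _
    calc (p k).toReal * ‖z‖ * (‖x‖ * (k:ℝ) * (‖Ggen p z x‖ * ‖Fgen p z‖ ^ (k - 1)))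
        ≤ (p k).toReal * 1 * (1 * (k:ℝ) * (‖Ggen p z x‖ * 1)) := by
          gcongr <;> first | assumption | positivity
      _ = (k : ℝ) * (p k).toReal * ‖Ggen p z x‖ := by ring
  calc Ggen p z x = ∑' t : PlaneTree, phiF p z t * Wgt x t := rfl
    _ = ∑' (k : ℕ) (v : Fin k → PlaneTree),
          phiF p z (node (List.ofFn v)) * Wgt x (node (List.ofFn v)) :=
        tsum_tree_eq _ hψ
    _ = ∑' k : ℕ, (((p k).toReal : ℂ) * z * Fgen p z ^ k
          + ((p k).toReal : ℂ) * z * (x * k * (Ggen p z x * Fgen p z ^ (k - 1)))) := by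
        refine tsum_congr fun k => ?_
        rw [Ggen_term p hp hz hx k]
        ring
    _ = (∑' k : ℕ, ((p k).toReal : ℂ) * z * Fgen p z ^ k)
        + ∑' k : ℕ, ((p k).toReal : ℂ) * z * (x * k * (Ggen p z x * Fgen p z ^ (k - 1))) :=
        Summable.tsum_add hS1 hS2
    _ = Fgen p z + z * x * PhiDeriv p (Fgen p z) * Ggen p z x := by
        rw [← Fgen_fixed p hp hz]
        congr 1
        calc ∑' k : ℕ, ((p k).toReal : ℂ) * z * (x * k * (Ggen p z x * Fgen p z ^ (k - 1)))
            = ∑' k : ℕ, z * x * Ggen p z x *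
                ((k : ℂ) * ((p k).toReal : ℂ) * Fgen p z ^ (k - 1)) := by
              refine tsum_congr fun k => ?_
              ring
          _ = z * x * Ggen p z x * PhiDeriv p (Fgen p z) := by
              rw [tsum_mul_left]; rfl
          _ = z * x * PhiDeriv p (Fgen p z) * Ggen p z x := by ring

/-- formula (4.1) of Devroye–Janson.
`G(z, x) = F(z) / (1 - z x Φ'(F(z)))` for `|z|, |x| < 1`. -/
theorem Ggen_eq
    (p : ℕ → ℝ≥0∞) (hp : ∑' k : ℕ, p k = 1)
    (hmean : ∑' k : ℕ, (k : ℝ≥0∞) * p k = 1)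
    (hvar_pos : 0 < xiVar p) (hvar_fin : xiVar p ≠ ⊤) :
    ∀ z x : ℂ, ‖z‖ < 1 → ‖x‖ < 1 →
      Ggen p z x = Fgen p z / (1 - z * x * PhiDeriv p (Fgen p z)) := by
  intro z x hz hx
  have hF1 : ‖Fgen p z‖ ≤ 1 := norm_Fgen_le_one p hp hz
  have hΦ : ‖PhiDeriv p (Fgen p z)‖ ≤ 1 := norm_PhiDeriv_le_one p hmean hF1
  have hdn : ‖z * x * PhiDeriv p (Fgen p z)‖ < 1 := by
    rw [norm_mul, norm_mul]
    calc ‖z‖ * ‖x‖ * ‖PhiDeriv p (Fgen p z)‖ ≤ ‖z‖ * 1 * 1 := by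
          gcongr <;> first | exact hx.le | exact hΦ | positivity
      _ = ‖z‖ := by ring
      _ < 1 := hz
  have hne : (1 : ℂ) - z * x * PhiDeriv p (Fgen p z) ≠ 0 := by
    intro h
    have h1 : (1 : ℂ) = z * x * PhiDeriv p (Fgen p z) := by
      exact sub_eq_zero.mp h
    rw [← h1] at hdn
    simp at hdn
  have hfix := Ggen_fixed p hp hmean hz hx
  rw [eq_div_iff hne]
  linear_combination hfix
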